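/- Let X, Y, Z be Banach spaces, U ⊆ X an open set, and T : Y → X a bounded linear operator of finite rank. If f : U → Z is finitely locally Lipschitz and Gâteaux differentiable at a point T y ∈ U (where y ∈ Y), then f ∘ T is Fréchet differentiable at y. -/

import Mathlib

open Filter Metric Topology

private theorem key_estimate {X Z : Type*} [NormedAddCommGroup X] [NormedSpace ℝ X]
    [NormedAddCommGroup Z] [NormedSpace ℝ Z]
    (V : Submodule ℝ X) [FiniteDimensional ℝ V]
    (f : X → Z) (A : X →L[ℝ] Z) (x : X) (U : Set X)
    (K : NNReal) (r r'' : ℝ) (hr : 0 < r) (hr'' : 0 < r'')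
    (hball : ball x r'' ⊆ U) (hxU : x ∈ U) (hxV : x ∈ V)
    (hK : LipschitzOnWith K f (U ∩ (V : Set X) ∩ ball x r))
    (hA : ∀ h : X, Tendsto (fun t : ℝ => t⁻¹ • (f (x + t • h) - f x)) (𝓝[≠] (0 : ℝ)) (𝓝 (A h)))
    {c : ℝ} (hc : 0 < c) :
    ∃ δ > 0, ∀ w ∈ V, ‖w‖ < δ →
      ‖f (x + w) - f x - A w‖ ≤ ((K : ℝ) + 1 + ‖A‖) * c * ‖w‖ := by
  -- for each direction, a radius where the difference quotient is close
  have hchoice : ∀ h : X, ∃ d > 0, ∀ t : ℝ, t ≠ 0 → |t| < d →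
      ‖t⁻¹ • (f (x + t • h) - f x) - A h‖ < c := by
    intro h
    obtain ⟨d, hd, hprop⟩ := Metric.tendsto_nhdsWithin_nhds.mp (hA h) c hc
    refine ⟨d, hd, fun t ht htd => ?_⟩
    have := hprop (x := t) ht (by simpa [Real.dist_eq] using htd)
    simpa [dist_eq_norm] using this
  choose d hd hdprop using hchoice
  -- finite net on the unit sphere of V
  obtain ⟨t, hts, htfin, htcov⟩ :=
    (isCompact_sphere (0 : V) 1).finite_cover_balls hc
  set S : Finset V := htfin.toFinset with hS
  set S' : Finset ℝ := insert (1 : ℝ) (S.image fun h => d h.1) with hS'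
  have hS'ne : S'.Nonempty := ⟨1, Finset.mem_insert_self _ _⟩
  set δ0 : ℝ := S'.min' hS'ne with hδ0
  have hδ0pos : 0 < δ0 := by
    rw [hδ0, Finset.lt_min'_iff]
    intro b hb
    rcases Finset.mem_insert.mp hb with hb | hb
    · simp [hb]
    · obtain ⟨h, _, rfl⟩ := Finset.mem_image.mp hb
      exact hd _
  refine ⟨min (min r r'') δ0, lt_min (lt_min hr hr'') hδ0pos, fun w hwV hwδ => ?_⟩
  rcases eq_or_ne w 0 with rfl | hw0
  · simp
  -- notation
  have ht0 : (0 : ℝ) < ‖w‖ := norm_pos_iff.mpr hw0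
  set t0 : ℝ := ‖w‖ with ht0def
  have hwr : ‖w‖ < r := lt_of_lt_of_le hwδ (le_trans (min_le_left _ _) (min_le_left _ _))
  have hwr'' : ‖w‖ < r'' := lt_of_lt_of_le hwδ (le_trans (min_le_left _ _) (min_le_right _ _))
  have hwδ0 : ‖w‖ < δ0 := lt_of_lt_of_le hwδ (min_le_right _ _)
  set u : X := t0⁻¹ • w with hu
  have huV : u ∈ V := V.smul_mem _ hwV
  have hunorm : ‖u‖ = 1 := by
    rw [hu, norm_smul, norm_inv, Real.norm_eq_abs, abs_of_pos ht0]
    field_simp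
    rfl
  have ht0u : t0 • u = w := by rw [hu, smul_inv_smul₀ (ne_of_gt ht0)]
  -- pick a net point close to u
  have huS : (⟨u, huV⟩ : V) ∈ sphere (0 : V) 1 := by
    simp [Submodule.coe_norm, hunorm]
  obtain ⟨hE, hhE, huhE⟩ := Set.mem_iUnion₂.mp (htcov huS)
  set h : X := (hE : X) with hh
  have hhV : h ∈ V := hE.2
  have hhnorm : ‖h‖ = 1 := by
    have := hts hhE
    simp only [mem_sphere, dist_zero_right] at this
    rw [hh, ← Submodule.coe_norm, this]
  have hhS : hE ∈ S := htfin.mem_toFinset.mpr hhE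
  have hδ0d : δ0 ≤ d h := by
    apply Finset.min'_le
    exact Finset.mem_insert_of_mem (Finset.mem_image.mpr ⟨hE, hhS, rfl⟩)
  have huh : ‖u - h‖ < c := by
    have : dist (⟨u, huV⟩ : V) hE < c := mem_ball.mp huhE
    rw [dist_eq_norm, Submodule.coe_norm] at this
    simpa using this
  -- memberships in the Lipschitz set
  have memset : ∀ v : X, v ∈ V → ‖v‖ < min (min r r'') δ0 →
      x + v ∈ U ∩ (V : Set X) ∩ ball x r := by
    intro v hvV hv
    refine ⟨⟨hball ?_, V.add_mem hxV hvV⟩, ?_⟩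
    · simp only [mem_ball, dist_self_add_left]
      exact lt_of_lt_of_le hv (le_trans (min_le_left _ _) (min_le_right _ _))
    · simp only [mem_ball, dist_self_add_left]
      exact lt_of_lt_of_le hv (le_trans (min_le_left _ _) (min_le_left _ _))
  have mem1 : x + w ∈ U ∩ (V : Set X) ∩ ball x r := memset w hwV hwδ
  have mem2 : x + t0 • h ∈ U ∩ (V : Set X) ∩ ball x r := by
    refine memset _ (V.smul_mem _ hhV) ?_
    rw [norm_smul, hhnorm, Real.norm_eq_abs, abs_of_pos ht0, mul_one]
    exact hwδ
  -- the three error terms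
  have hE1 : ‖t0⁻¹ • (f (x + w) - f (x + t0 • h))‖ ≤ (K : ℝ) * c := by
    have hlip := hK.dist_le_mul _ mem1 _ mem2
    rw [dist_eq_norm, dist_eq_norm] at hlip
    have hdist : ‖x + w - (x + t0 • h)‖ = t0 * ‖u - h‖ := by
      rw [show x + w - (x + t0 • h) = t0 • u - t0 • h by rw [ht0u]; abel,
        ← smul_sub, norm_smul, Real.norm_eq_abs, abs_of_pos ht0]
    rw [norm_smul, norm_inv, Real.norm_eq_abs, abs_of_pos ht0]
    calc t0⁻¹ * ‖f (x + w) - f (x + t0 • h)‖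
        ≤ t0⁻¹ * ((K : ℝ) * (t0 * ‖u - h‖)) := by
          apply mul_le_mul_of_nonneg_left _ (le_of_lt (inv_pos.mpr ht0))
          rw [← hdist]; exact hlip
      _ = (K : ℝ) * ‖u - h‖ := by field_simp
      _ ≤ (K : ℝ) * c := mul_le_mul_of_nonneg_left (le_of_lt huh) K.2
  have hE2 : ‖t0⁻¹ • (f (x + t0 • h) - f x) - A h‖ < c := by
    apply hdprop h t0 (ne_of_gt ht0)
    rw [abs_of_pos ht0]
    exact lt_of_lt_of_le hwδ0 hδ0d
  have hE3 : ‖A h - A u‖ ≤ ‖A‖ * c := by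
    calc ‖A h - A u‖ = ‖A (h - u)‖ := by rw [map_sub]
      _ ≤ ‖A‖ * ‖h - u‖ := A.le_opNorm _
      _ ≤ ‖A‖ * c := by
          apply mul_le_mul_of_nonneg_left _ (norm_nonneg A)
          rw [norm_sub_rev]; exact le_of_lt huh
  -- combine
  have hD : f (x + w) - f x - A w =
      t0 • (t0⁻¹ • (f (x + w) - f (x + t0 • h)) +
        (t0⁻¹ • (f (x + t0 • h) - f x) - A h) + (A h - A u)) := by
    have hAw : A w = t0 • A u := by rw [← map_smul, ht0u]
    rw [hAw, smul_add, smul_add, smul_inv_smul₀ (ne_of_gt ht0), smul_sub,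
      smul_inv_smul₀ (ne_of_gt ht0)]
    module
  rw [hD, norm_smul, Real.norm_eq_abs, abs_of_pos ht0]
  rw [show ((K : ℝ) + 1 + ‖A‖) * c * ‖w‖ = t0 * (((K : ℝ) + 1 + ‖A‖) * c) by ring]
  apply mul_le_mul_of_nonneg_left _ (le_of_lt ht0)
  calc ‖_ + _ + _‖ ≤ ‖t0⁻¹ • (f (x + w) - f (x + t0 • h))‖ +
        ‖t0⁻¹ • (f (x + t0 • h) - f x) - A h‖ + ‖A h - A u‖ := norm_add₃_le
    _ ≤ (K : ℝ) * c + c + ‖A‖ * c := add_le_add (add_le_add hE1 hE2.le) hE3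
    _ = ((K : ℝ) + 1 + ‖A‖) * c := by ring


section Defs
variable {X Z : Type*} [NormedAddCommGroup X] [NormedSpace ℝ X]
  [NormedAddCommGroup Z] [NormedSpace ℝ Z]

/-- `A` is the Gâteaux derivative of `f` at `x`. -/
def HasGateauxDerivAt (f : X → Z) (A : X →L[ℝ] Z) (x : X) : Prop :=
  ∀ h : X, Tendsto (fun t : ℝ => t⁻¹ • (f (x + t • h) - f x)) (𝓝[≠] (0 : ℝ)) (𝓝 (A h))

/-- `f` is Gâteaux differentiable at `x`. -/
def GateauxDifferentiableAt (f : X → Z) (x : X) : Prop :=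
  ∃ A : X →L[ℝ] Z, HasGateauxDerivAt f A x

/-- `f` is finitely locally Lipschitz on an open set `U`: for every finite dimensional
affine subspace `V` of `X` meeting `U`, the restriction of `f` to `U ∩ V` is locally
Lipschitz. -/
def FinitelyLocallyLipschitzOn (f : X → Z) (U : Set X) : Prop :=
  ∀ V : AffineSubspace ℝ X, FiniteDimensional ℝ V.direction →
    (U ∩ (V : Set X)).Nonempty →
      ∀ x ∈ U ∩ (V : Set X), ∃ (K : NNReal) (r : ℝ), 0 < r ∧
        LipschitzOnWith K f (U ∩ (V : Set X) ∩ ball x r)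

/-- `f` is finitely Lipschitz: its restriction to every finite dimensional affine
subspace of `X` is Lipschitz. -/
def FinitelyLipschitz (f : X → Z) : Prop :=
  ∀ V : AffineSubspace ℝ X, FiniteDimensional ℝ V.direction →
    ∃ K : NNReal, LipschitzOnWith K f (V : Set X)
end Defs

/-- Let `X`, `Y`, `Z` be Banach spaces, `U ⊆ X` open and `T : Y → X` a
finite rank bounded linear operator. If `f : U → Z` is finitely locally Lipschitz and
Gâteaux differentiable at `T y ∈ U`, then `f ∘ T` is Fréchet differentiable at `y`. -/
theorem finiteRank_gateaux_implies_frechet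
    {X Y Z : Type*} [NormedAddCommGroup X] [NormedSpace ℝ X] [CompleteSpace X]
    [NormedAddCommGroup Y] [NormedSpace ℝ Y] [CompleteSpace Y]
    [NormedAddCommGroup Z] [NormedSpace ℝ Z] [CompleteSpace Z]
    (U : Set X) (hU : IsOpen U) (T : Y →L[ℝ] X)
    (hT : FiniteDimensional ℝ (LinearMap.range (T : Y →ₗ[ℝ] X)))
    (f : X → Z) (hf : FinitelyLocallyLipschitzOn f U)
    (y : Y) (hy : T y ∈ U) (hG : GateauxDifferentiableAt f (T y)) :
    DifferentiableAt ℝ (f ∘ T) y := by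
  obtain ⟨A, hA⟩ := hG
  set x := T y with hx
  set V := LinearMap.range (T : Y →ₗ[ℝ] X) with hV
  have : FiniteDimensional ℝ V := hT
  have hxV : x ∈ V := ⟨y, rfl⟩
  have hdir : FiniteDimensional ℝ (V.toAffineSubspace).direction := by
    rw [Submodule.toAffineSubspace_direction]; exact hT
  obtain ⟨K, r, hr, hK⟩ := hf V.toAffineSubspace hdir ⟨x, hy, hxV⟩ x ⟨hy, hxV⟩
  obtain ⟨r'', hr'', hball⟩ := Metric.isOpen_iff.mp hU x hy
  have hK' : LipschitzOnWith K f (U ∩ (V : Set X) ∩ ball x r) := hK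
  suffices H : HasFDerivAt (f ∘ T) (A.comp T) y from H.differentiableAt
  rw [hasFDerivAt_iff_isLittleO_nhds_zero, Asymptotics.isLittleO_iff]
  intro c hc
  have hC : (0 : ℝ) < (K : ℝ) + 1 + ‖A‖ := by positivity
  have hT1 : (0 : ℝ) < ‖T‖ + 1 := by positivity
  set c' := c / (((K : ℝ) + 1 + ‖A‖) * (‖T‖ + 1)) with hc'def
  have hc' : 0 < c' := by positivity
  obtain ⟨δ, hδ, hest⟩ := key_estimate V f A x U K r r'' hr hr'' hball hy hxV hK' hA hc'
  rw [Metric.eventually_nhds_iff]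
  refine ⟨δ / (‖T‖ + 1), by positivity, fun k hk => ?_⟩
  have hknorm : ‖k‖ < δ / (‖T‖ + 1) := by rwa [dist_zero_right] at hk
  have hTkn : ‖T k‖ ≤ ‖T‖ * ‖k‖ := T.le_opNorm k
  have hTk : ‖T k‖ < δ := by
    calc ‖T k‖ ≤ ‖T‖ * ‖k‖ := hTkn
      _ < ‖T‖ * (δ / (‖T‖ + 1)) + δ / (‖T‖ + 1) := by
          nlinarith [norm_nonneg (T k), norm_nonneg k, norm_nonneg T, div_pos hδ hT1]
      _ = δ := by field_simp
  have hbound := hest (T k) ⟨k, rfl⟩ hTk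
  have hgoal : (f ∘ T) (y + k) - (f ∘ T) y - (A.comp T) k = f (x + T k) - f x - A (T k) := by
    simp [Function.comp, hx, map_add]
  rw [hgoal]
  calc ‖f (x + T k) - f x - A (T k)‖ ≤ ((K : ℝ) + 1 + ‖A‖) * c' * ‖T k‖ := hbound
    _ ≤ ((K : ℝ) + 1 + ‖A‖) * c' * (‖T‖ * ‖k‖) := by
        apply mul_le_mul_of_nonneg_left hTkn (by positivity)
    _ = c * (‖T‖ / (‖T‖ + 1)) * ‖k‖ := by rw [hc'def]; field_simp
    _ ≤ c * 1 * ‖k‖ := by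
        apply mul_le_mul_of_nonneg_right _ (norm_nonneg k)
        apply mul_le_mul_of_nonneg_left _ hc.le
        rw [div_le_one hT1]; linarith
    _ = c * ‖k‖ := by ring
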